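/- Define polynomials F_n in the multivariate polynomial ring ℤ[X_1, X_2, X_3, …] (MvPolynomial over positive natural number indices) by F_0 = 1 and F_n = ∑_{j=1}^{n} X_j · F_{n−j} for n ≥ 1 (these are the generic generalized Fibonacci polynomials). Let φ be the ℤ-algebra homomorphism from this polynomial ring to itself determined by X_j ↦ (−1)^{j+1} F_j. Then for every n ≥ 1, φ(F_n) = (−1)^{n+1} X_n. (In particular t_1 = F_1, −t_2 = F_1² − F_2, t_3 = F_1³ − 2F_1F_2 + F_3, etc.: the parameters are recovered from the GFP polynomials by the substitution t_j ↦ (−1)^{j+1} F_j.) -/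

import Mathlib

open MvPolynomial in
noncomputable def gfpX (j : ℕ) : MvPolynomial ℕ+ ℤ :=
  if h : 1 ≤ j then (X (⟨j, h⟩ : ℕ+) : MvPolynomial ℕ+ ℤ) else 0


open MvPolynomial in
/-- The parameters are recovered from the generic GFP polynomials by the
substitution `t_j ↦ (−1)^{j+1} F_j`: if `φ` is the `ℤ`-algebra endomorphism of
`ℤ[X₁, X₂, …]` with `φ(X_j) = (−1)^{j+1} F_j`, then `φ(F_n) = (−1)^{n+1} X_n`. -/
theorem gfp_parameter_involution (F : ℕ → MvPolynomial ℕ+ ℤ)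
    (hF0 : F 0 = 1)
    (hF : ∀ n, 1 ≤ n →
      F n = ∑ j ∈ (Finset.Icc 1 n).attach,
        (X (⟨j.1, (Finset.mem_Icc.mp j.2).1⟩ : ℕ+) : MvPolynomial ℕ+ ℤ) * F (n - j.1))
    (φ : MvPolynomial ℕ+ ℤ →ₐ[ℤ] MvPolynomial ℕ+ ℤ)
    (hφ : ∀ j : ℕ+, φ (X j) = (-1) ^ ((j : ℕ) + 1) * F (j : ℕ)) :
    ∀ n : ℕ, ∀ hn : 1 ≤ n,
      φ (F n) = (-1) ^ (n + 1) * X (⟨n, hn⟩ : ℕ+) := by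
  have hF' : ∀ n, 1 ≤ n → F n = ∑ j ∈ Finset.Icc 1 n, gfpX j * F (n - j) := by
    intro n hn
    rw [hF n hn, ← Finset.sum_attach (Finset.Icc 1 n) (fun j => gfpX j * F (n - j))]
    refine Finset.sum_congr rfl fun j hj => ?_
    have h1 : 1 ≤ j.1 := (Finset.mem_Icc.mp j.2).1
    simp [gfpX, h1]
  intro n
  induction n using Nat.strong_induction_on with
  | _ n ih =>
    intro hn
    have hsplit : Finset.Icc 1 n = insert n (Finset.Icc 1 (n - 1)) := by
      ext k; simp [Finset.mem_Icc]; omega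
    have hnotmem : n ∉ Finset.Icc 1 (n - 1) := by simp [Finset.mem_Icc]; omega
    have hFn : F n = (X (⟨n, hn⟩ : ℕ+) : MvPolynomial ℕ+ ℤ) + ∑ j ∈ Finset.Icc 1 (n - 1), gfpX j * F (n - j) := by
      rw [hF' n hn, hsplit, Finset.sum_insert hnotmem]
      simp [gfpX, hn, hF0]
    have key : ∀ j ∈ Finset.Icc 1 (n - 1),
        φ (gfpX j * F (n - j)) = (-1) ^ n * (F j * gfpX (n - j)) := by
      intro j hj
      obtain ⟨hj1, hj2⟩ := Finset.mem_Icc.mp hj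
      have hjn : j < n := by omega
      have hpos : 1 ≤ n - j := by omega
      have hg : gfpX j = (X (⟨j, hj1⟩ : ℕ+) : MvPolynomial ℕ+ ℤ) := by simp [gfpX, hj1]
      have hg2 : gfpX (n - j) = (X (⟨n - j, hpos⟩ : ℕ+) : MvPolynomial ℕ+ ℤ) := by simp [gfpX, hpos]
      rw [hg, map_mul]; erw [hφ]; rw [show φ (F (n - j)) = (-1 : MvPolynomial ℕ+ ℤ) ^ (n - j + 1) * (X (⟨n - j, hpos⟩ : ℕ+) : MvPolynomial ℕ+ ℤ) from ih (n - j) (by omega) hpos]; erw [← hg2]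
      simp only [PNat.mk_coe]
      have hsign : ((-1 : MvPolynomial ℕ+ ℤ)) ^ (j + 1) * (-1) ^ (n - j + 1)
          = (-1) ^ n := by
        rw [← pow_add]
        have : j + 1 + (n - j + 1) = n + 2 := by omega
        rw [this]; ring
      linear_combination (F j * gfpX (n - j)) * hsign
    have hreindex : ∑ j ∈ Finset.Icc 1 (n - 1), F j * gfpX (n - j)
        = ∑ j ∈ Finset.Icc 1 (n - 1), gfpX j * F (n - j) := by
      apply Finset.sum_nbij' (i := fun j => n - j) (j := fun j => n - j)
      · intro a ha; simp [Finset.mem_Icc] at *; omega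
      · intro a ha; simp [Finset.mem_Icc] at *; omega
      · intro a ha; simp [Finset.mem_Icc] at *; omega
      · intro a ha; simp [Finset.mem_Icc] at *; omega
      · intro a ha
        simp [Finset.mem_Icc] at ha
        have : n - (n - a) = a := by omega
        rw [this, mul_comm]
    calc φ (F n) = ∑ j ∈ Finset.Icc 1 n, φ (gfpX j * F (n - j)) := by
          rw [hF' n hn, map_sum]
      _ = φ (gfpX n * F 0) + ∑ j ∈ Finset.Icc 1 (n - 1), φ (gfpX j * F (n - j)) := by
          rw [hsplit, Finset.sum_insert hnotmem]; simp
      _ = (-1) ^ (n + 1) * F n + (-1) ^ n * ∑ j ∈ Finset.Icc 1 (n - 1), gfpX j * F (n - j) := by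
          rw [Finset.sum_congr rfl key, ← Finset.mul_sum, hreindex]
          simp [gfpX, hn, hF0, hφ]
          exact hφ ⟨n, hn⟩
      _ = (-1) ^ (n + 1) * (X (⟨n, hn⟩ : ℕ+) : MvPolynomial ℕ+ ℤ) := by
          have h2 : (∑ j ∈ Finset.Icc 1 (n - 1), gfpX j * F (n - j))
              = F n - (X (⟨n, hn⟩ : ℕ+) : MvPolynomial ℕ+ ℤ) := by rw [hFn]; ring
          rw [h2]; ring
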